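/- Let φ : ℝⁿ → ℝ be continuously differentiable and bounded from below, let a, b > 0, and let (x^k) be a sequence satisfying the sufficient-decrease condition (H1) and the modified relative-error condition (H3). Suppose x̄ is an accumulation point of (x^k) and φ satisfies the basic PLK condition at x̄: there exist ε > 0, η > 0, and a continuous concave function ϕ : [0, η] → [0, ∞) with ϕ(0) = 0, ϕ differentiable on (0, η) with ϕ'(s) > 0 for all s ∈ (0, η), such that ϕ'(φ(x) − φ(x̄)) · ‖∇φ(x)‖ ≥ 1 whenever ‖x − x̄‖ < ε and φ(x̄) < φ(x) < φ(x̄) + η. Then ∑_{k=0}^∞ ‖x^{k+1} − x^k‖ < ∞, the whole sequence (x^k) converges to x̄, and ∇φ(x̄) = 0. -/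

import Mathlib

open Filter Topology

/-- Global convergence of generic descent algorithms satisfying (H1) and (H3)
under the basic PLK condition at an accumulation point of the iterates. -/
theorem global_convergence_H1_H3_basic_PLK
    (n : ℕ) (φ : EuclideanSpace ℝ (Fin n) → ℝ)
    (hφ : ContDiff ℝ 1 φ)
    (hbdd : ∃ m : ℝ, ∀ x, m ≤ φ x)
    (a b : ℝ) (ha : 0 < a) (hb : 0 < b)
    (x : ℕ → EuclideanSpace ℝ (Fin n))
    (hH1 : ∀ k : ℕ, φ (x (k + 1)) + a * ‖x (k + 1) - x k‖ ^ 2 ≤ φ (x k))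
    (hH3 : ∀ k : ℕ, ‖gradient φ (x k)‖ ≤ b * ‖x (k + 1) - x k‖)
    (xbar : EuclideanSpace ℝ (Fin n))
    (hacc : ∃ σ : ℕ → ℕ, StrictMono σ ∧
      Tendsto (fun j => x (σ j)) atTop (𝓝 xbar))
    (hPLK : ∃ (ε η : ℝ), 0 < ε ∧ 0 < η ∧
      ∃ (ϕ ϕ' : ℝ → ℝ),
        ϕ 0 = 0 ∧
        ContinuousOn ϕ (Set.Icc 0 η) ∧
        ConcaveOn ℝ (Set.Icc 0 η) ϕ ∧
        (∀ s ∈ Set.Icc (0 : ℝ) η, 0 ≤ ϕ s) ∧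
        (∀ s ∈ Set.Ioo (0 : ℝ) η, HasDerivAt ϕ (ϕ' s) s) ∧
        (∀ s ∈ Set.Ioo (0 : ℝ) η, 0 < ϕ' s) ∧
        (∀ y, ‖y - xbar‖ < ε → φ xbar < φ y → φ y < φ xbar + η →
          1 ≤ ϕ' (φ y - φ xbar) * ‖gradient φ y‖)) :
    Summable (fun k => ‖x (k + 1) - x k‖) ∧
      Tendsto x atTop (𝓝 xbar) ∧ gradient φ xbar = 0 := by
  obtain ⟨σ, hσ, hσx⟩ := hacc
  obtain ⟨ε, η, hε, hη, ϕ, ϕ', hϕ0, hϕc, hϕconc, hϕnn, hϕd, hϕ'pos, hKL⟩ := hPLK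
  set d : ℕ → ℝ := fun k => ‖x (k + 1) - x k‖ with hd
  have hd0 : ∀ k, 0 ≤ d k := fun k => norm_nonneg _
  have hH1' : ∀ k, φ (x (k + 1)) + a * d k ^ 2 ≤ φ (x k) := hH1
  have hH3' : ∀ k, ‖gradient φ (x k)‖ ≤ b * d k := hH3
  -- φ ∘ x is antitone
  have hmono : Antitone (fun k => φ (x k)) := by
    apply antitone_nat_of_succ_le
    intro k
    have := hH1' k
    nlinarith [sq_nonneg (d k), hd0 k]
  -- bounded below
  have hbb : BddBelow (Set.range fun k => φ (x k)) := by
    obtain ⟨m, hm⟩ := hbdd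
    exact ⟨m, by rintro _ ⟨k, rfl⟩; exact hm _⟩
  set ℓ : ℝ := ⨅ k, φ (x k) with hℓdef
  have hℓ : Tendsto (fun k => φ (x k)) atTop (𝓝 ℓ) := tendsto_atTop_ciInf hmono hbb
  have hσtop : Tendsto σ atTop atTop := hσ.tendsto_atTop
  have hℓeq : φ xbar = ℓ := by
    refine tendsto_nhds_unique ((hφ.continuous.tendsto xbar).comp hσx) (hℓ.comp hσtop)
  have hge : ∀ k, φ xbar ≤ φ (x k) := by
    intro k; rw [hℓeq]; exact ciInf_le hbb k
  have hgradcont : Continuous (gradient φ) :=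
    ((InnerProductSpace.toDual ℝ _).symm.continuous).comp (hφ.continuous_fderiv one_ne_zero)
  -- it suffices to prove summability and convergence
  suffices h : Summable d ∧ Tendsto x atTop (𝓝 xbar) by
    obtain ⟨hs, ht⟩ := h
    refine ⟨hs, ht, ?_⟩
    have hdz : Tendsto d atTop (𝓝 0) := hs.tendsto_atTop_zero
    have hgn : Tendsto (fun k => ‖gradient φ (x k)‖) atTop (𝓝 ‖gradient φ xbar‖) :=
      ((hgradcont.tendsto xbar).comp ht).norm
    have hbd : Tendsto (fun k => b * d k) atTop (𝓝 0) := by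
      simpa using hdz.const_mul b
    have : ‖gradient φ xbar‖ ≤ 0 :=
      le_of_tendsto_of_tendsto hgn hbd (Eventually.of_forall fun k => hH3 k)
    simpa [norm_le_zero_iff] using this
  by_cases hA : ∃ K, φ (x K) = φ xbar
  · -- eventually constant case
    obtain ⟨K, hK⟩ := hA
    have heq : ∀ k, K ≤ k → φ (x k) = φ xbar := fun k hk =>
      le_antisymm (hK ▸ hmono hk) (hge k)
    have hdz : ∀ k, K ≤ k → d k = 0 := by
      intro k hk
      have h1 := hH1' k
      have e1 := heq k hk
      have e2 := heq (k + 1) (hk.trans (Nat.le_succ k))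
      have h3 : d k ^ 2 = 0 := by nlinarith [sq_nonneg (d k)]
      exact pow_eq_zero_iff two_ne_zero |>.mp h3
    have hconst : ∀ k, K ≤ k → x k = x K := by
      intro k hk
      induction k, hk using Nat.le_induction with
      | base => rfl
      | succ k hk ih =>
        have : x (k + 1) - x k = 0 := by
          rw [← norm_eq_zero]; exact hdz k hk
        rw [sub_eq_zero] at this
        rw [this, ih]
    have hxK : xbar = x K := by
      have h1 : Tendsto (fun j => x (σ j)) atTop (𝓝 (x K)) := by
        refine tendsto_const_nhds.congr' ?_
        filter_upwards [eventually_ge_atTop K] with j hj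
        exact (hconst (σ j) (hj.trans hσ.le_apply)).symm
      exact tendsto_nhds_unique hσx h1
    refine ⟨summable_of_ne_finset_zero (s := Finset.range K) ?_, ?_⟩
    · intro k hk
      exact hdz k (Nat.le_of_not_lt (Finset.mem_range.not.mp hk))
    · refine tendsto_const_nhds.congr' ?_
      filter_upwards [eventually_ge_atTop K] with k hk
      rw [hconst k hk]; exact hxK
  · -- main case : φ (x k) > φ xbar for all k
    push_neg at hA
    have hgt : ∀ k, φ xbar < φ (x k) := fun k => lt_of_le_of_ne (hge k) (Ne.symm (hA k))
    set r : ℕ → ℝ := fun k => φ (x k) - φ xbar with hr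
    have hrdef : ∀ k, r k = φ (x k) - φ xbar := fun _ => rfl
    have hrpos : ∀ k, 0 < r k := fun k => sub_pos.mpr (hgt k)
    have hranti : Antitone r := fun i j hij => by
      simp only [hr]; exact sub_le_sub_right (hmono hij) _
    have hr0 : Tendsto r atTop (𝓝 0) := by
      have := hℓ.sub_const (φ xbar)
      rw [← hℓeq, sub_self] at this
      exact this
    -- key descent estimate
    have key : ∀ k, ‖x k - xbar‖ < ε → r k < η →
        d k ≤ (b / a) * (ϕ (r k) - ϕ (r (k + 1))) := by
      intro k hxk hrk
      rcases (hd0 k).eq_or_lt with h0 | hdk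
      · have hx1 : x (k + 1) = x k := by
          have h2 : ‖x (k + 1) - x k‖ = 0 := h0.symm
          rwa [norm_eq_zero, sub_eq_zero] at h2
        have hre : r (k + 1) = r k := by rw [hrdef, hrdef, hx1]
        rw [hre, sub_self, mul_zero, ← h0]
      · have hdec : a * d k ^ 2 ≤ r k - r (k + 1) := by
          have := hH1' k
          rw [hrdef, hrdef]
          linarith
        have hlt : r (k + 1) < r k := by nlinarith [mul_pos hdk hdk]
        have hkl := hKL (x k) hxk (hgt k) (by have := hrdef k; linarith)
        have hg3 := hH3' k
        rw [← hrdef k] at hkl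
        have hp : 0 < ϕ' (r k) := hϕ'pos _ ⟨hrpos k, hrk⟩
        have hslope : ϕ' (r k) ≤ slope ϕ (r (k + 1)) (r k) :=
          hϕconc.le_slope_of_hasDerivAt
            ⟨(hrpos (k + 1)).le, (hlt.trans hrk).le⟩ ⟨(hrpos k).le, hrk.le⟩ hlt
            (hϕd _ ⟨hrpos k, hrk⟩)
        have hsl : ϕ' (r k) * (r k - r (k + 1)) ≤ ϕ (r k) - ϕ (r (k + 1)) := by
          rw [slope_def_field] at hslope
          have h2 : 0 < r k - r (k + 1) := sub_pos.mpr hlt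
          calc ϕ' (r k) * (r k - r (k + 1))
              ≤ (ϕ (r k) - ϕ (r (k + 1))) / (r k - r (k + 1)) * (r k - r (k + 1)) := by
                apply mul_le_mul_of_nonneg_right _ h2.le
                simpa [div_sub_div_same] using hslope
            _ = ϕ (r k) - ϕ (r (k + 1)) := div_mul_cancel₀ _ h2.ne'
        -- combine : 1 ≤ ϕ'(r k) * ‖g‖ ≤ ϕ'(r k) * b * d k ; a d² ϕ' ≤ ϕ diff
        have h1 : 1 ≤ ϕ' (r k) * (b * d k) :=
          hkl.trans (mul_le_mul_of_nonneg_left hg3 hp.le)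
        have h2 : ϕ' (r k) * (a * d k ^ 2) ≤ ϕ (r k) - ϕ (r (k + 1)) :=
          le_trans (mul_le_mul_of_nonneg_left hdec hp.le) hsl
        rw [div_mul_eq_mul_div, le_div_iff₀ ha]
        nlinarith [mul_le_mul_of_nonneg_right h1 (mul_pos ha hdk).le,
          mul_le_mul_of_nonneg_right h2 hb.le]
    -- choose the base index K
    have hrmem : ∀ᶠ k in atTop, r k ∈ Set.Icc 0 η := by
      filter_upwards [hr0.eventually_lt_const hη] with k hk
      exact ⟨(hrpos k).le, hk.le⟩
    have hΔ : Tendsto (fun k => ϕ (r k)) atTop (𝓝 0) := by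
      have hc : ContinuousWithinAt ϕ (Set.Icc 0 η) 0 := hϕc 0 ⟨le_rfl, hη.le⟩
      have := hc.tendsto.comp (tendsto_nhdsWithin_iff.mpr ⟨hr0, hrmem⟩)
      simpa [hϕ0, Function.comp_def] using this
    have hCev : ∀ᶠ j in atTop, ‖x (σ j) - xbar‖ < ε / 2 ∧
        (b / a) * ϕ (r (σ j)) < ε / 2 ∧ r (σ j) < η := by
      have e1 : ∀ᶠ j in atTop, dist (x (σ j)) xbar < ε / 2 :=
        Metric.tendsto_nhds.mp hσx (ε / 2) (by positivity)
      have e2 : ∀ᶠ j in atTop, (b / a) * ϕ (r (σ j)) < ε / 2 := by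
        have : Tendsto (fun j => (b / a) * ϕ (r (σ j))) atTop (𝓝 0) := by
          simpa using ((hΔ.comp hσtop).const_mul (b / a))
        exact this.eventually_lt_const (by positivity)
      have e3 : ∀ᶠ j in atTop, r (σ j) < η :=
        (hr0.comp hσtop).eventually_lt_const hη
      filter_upwards [e1, e2, e3] with j h1 h2 h3
      exact ⟨by rwa [dist_eq_norm] at h1, h2, h3⟩
    obtain ⟨j₀, hj₀⟩ := hCev.exists
    set K := σ j₀ with hKdef
    obtain ⟨hK1, hK2, hK3⟩ := hj₀
    set C : ℝ := (b / a) * ϕ (r K) with hCdef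
    have hϕrnn : ∀ k, K ≤ k → 0 ≤ ϕ (r k) := fun k hk =>
      hϕnn _ ⟨(hrpos k).le, ((hranti hk).trans_lt hK3).le⟩
    -- main induction
    have main : ∀ k, K ≤ k →
        (∑ i ∈ Finset.Ico K k, d i) + (b / a) * ϕ (r k) ≤ C ∧
        ‖x k - x K‖ ≤ ∑ i ∈ Finset.Ico K k, d i := by
      intro k hk
      induction k, hk using Nat.le_induction with
      | base => simp [hCdef]
      | succ k hk ih =>
        obtain ⟨ih1, ih2⟩ := ih
        have hSnn : (0:ℝ) ≤ (b / a) * ϕ (r k) := by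
          have := hϕrnn k hk; positivity
        have hxkε : ‖x k - xbar‖ < ε := by
          calc ‖x k - xbar‖ ≤ ‖x k - x K‖ + ‖x K - xbar‖ := norm_sub_le_norm_sub_add_norm_sub _ _ _
            _ < C + ε / 2 := by
                have : ‖x k - x K‖ ≤ C := by
                  refine ih2.trans ?_; linarith
                linarith
            _ ≤ ε / 2 + ε / 2 := by linarith [hK2]
            _ = ε := by ring
        have hrk : r k < η := (hranti hk).trans_lt hK3
        have hkey := key k hxkε hrk
        constructor
        · rw [Finset.sum_Ico_succ_top hk]
          linarith
        · rw [Finset.sum_Ico_succ_top hk]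
          calc ‖x (k + 1) - x K‖ ≤ ‖x (k + 1) - x k‖ + ‖x k - x K‖ :=
                norm_sub_le_norm_sub_add_norm_sub _ _ _
            _ ≤ ∑ i ∈ Finset.Ico K k, d i + d k := by
                simp only [hd]; linarith
    -- summability
    have hsum : Summable d := by
      rw [← summable_nat_add_iff K]
      apply summable_of_sum_range_le (c := C) (fun i => hd0 _)
      intro m
      have := (main (K + m) (Nat.le_add_right _ _)).1
      have hnn := hϕrnn (K + m) (Nat.le_add_right _ _)
      have hsum_eq : ∑ i ∈ Finset.range m, d (i + K) = ∑ i ∈ Finset.Ico K (K + m), d i := by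
        rw [Finset.sum_Ico_eq_sum_range]
        simp [add_comm, Nat.add_sub_cancel_left]
      have hba : (0:ℝ) ≤ b / a := (div_pos hb ha).le
      nlinarith [mul_nonneg hba hnn]
    refine ⟨hsum, ?_⟩
    have hcauchy : CauchySeq x := by
      apply cauchySeq_of_summable_dist
      refine hsum.congr fun k => ?_
      rw [dist_eq_norm, norm_sub_rev]
    obtain ⟨y, hy⟩ := cauchySeq_tendsto_of_complete hcauchy
    have : y = xbar := tendsto_nhds_unique (hy.comp hσtop) hσx
    rwa [this] at hy
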